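/- Let X be a compact metric space with Borel σ-algebra B, μ a Borel probability measure on X, and G a sub-σ-algebra of B. The relatively independent square μ⊠_G μ is concentrated on the diagonal Δ = {(x,x) : x ∈ X} of X×X if and only if the σ-algebras G and B coincide up to μ-null sets. -/

import Mathlib

open MeasureTheory Filter Topology Set
open scoped symmDiff Classical ENNReal NNReal

section Defs

variable {X : Type*}

/-- The pair `(x, y)` is (positively) asymptotic for `T`. -/
def IsAsymptoticPair [PseudoMetricSpace X] (T : X → X) (x y : X) : Prop :=
  Tendsto (fun n : ℕ => dist (T^[n] x) (T^[n] y)) atTop (𝓝 0)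

/-- Shannon entropy of the finite measurable partition of `X` given by the fibers of a
map `p` into a finite type. -/
noncomputable def partEntropy [MeasurableSpace X] (μ : Measure X) {ι : Type*} [Fintype ι]
    (p : X → ι) : ℝ :=
  ∑ i : ι, Real.negMulLog (μ (p ⁻¹' {i})).toReal

/-- Conditional Shannon entropy `H(P | F)` of the finite partition given by the fibers
of `p` with respect to the sub-σ-algebra `F`:
`H(P|F) = ∑_{A ∈ P} ∫ -E(1_A|F) log E(1_A|F) dμ`. -/
noncomputable def condPartEntropy [MeasurableSpace X] (μ : Measure X)
    (F : MeasurableSpace X) {ι : Type*} [Fintype ι] (p : X → ι) : ℝ :=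
  ∑ i : ι, ∫ x, Real.negMulLog ((μ[(p ⁻¹' {i}).indicator (fun _ => (1 : ℝ)) | F]) x) ∂μ

/-- The σ-algebra `σ(P^-)` generated by the partitions `T^{-n}P`, `n ≥ 1`
(the "past" of the partition given by the fibers of `p`). -/
def partPast (T : X → X) {ι : Type*} (p : X → ι) : MeasurableSpace X :=
  ⨆ n : ℕ, MeasurableSpace.comap (fun x => p (T^[n + 1] x)) ⊤

/-- The σ-algebra `σ(P^T)` generated by the partitions `T^{-n}P`, `n ∈ ℤ`, where `S = T⁻¹`. -/
def partHull (T S : X → X) {ι : Type*} (p : X → ι) : MeasurableSpace X :=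
  ⨆ n : ℕ,
    MeasurableSpace.comap (fun x => p (T^[n] x)) ⊤ ⊔
      MeasurableSpace.comap (fun x => p (S^[n] x)) ⊤

/-- Kolmogorov–Sinai entropy of a finite partition: `h_μ(P, T) = H(P | P^-)`. -/
noncomputable def partKS [MeasurableSpace X] (μ : Measure X) (T : X → X) {ι : Type*}
    [Fintype ι] (p : X → ι) : ℝ :=
  condPartEntropy μ (partPast T p) p

/-- Kolmogorov–Sinai (measure-theoretic) entropy `h_μ(X, T)` of the system:
the supremum over all finite measurable partitions `P` of `h_μ(P, T)`. -/
noncomputable def ksEntropy [MeasurableSpace X] (μ : Measure X) (T : X → X) : ℝ≥0∞ :=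
  ⨆ (k : ℕ) (p : X → Fin k) (_ : Measurable p), ENNReal.ofReal (partKS μ T p)

/-- The Pinsker σ-algebra `Π_μ`: the σ-algebra generated by all finite measurable
partitions with zero Kolmogorov–Sinai entropy. -/
def pinskerAlg [MeasurableSpace X] (μ : Measure X) (T : X → X) : MeasurableSpace X :=
  ⨆ (k : ℕ) (p : X → Fin k) (_ : Measurable p) (_ : partKS μ T p = 0),
    MeasurableSpace.comap p ⊤

/-- Minimal cardinality of a subcover of `⋁_{i=0}^{n-1} T^{-i} C`, where `C` is a
finite cover of `X`. -/
noncomputable def coverNum (T : X → X) {k : ℕ} (C : Fin k → Set X) (n : ℕ) : ℕ :=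
  sInf {m : ℕ | ∃ f : Fin m → Fin n → Fin k,
    (⋃ j : Fin m, ⋂ i : Fin n, T^[(i : ℕ)] ⁻¹' C (f j i)) = Set.univ}

/-- Topological entropy of a finite cover `C`:
`h(C, T) = inf_n (1/n) log N(⋁_{i=0}^{n-1} T^{-i} C) = lim_n (1/n) log N(...)`. -/
noncomputable def coverEntropyOf (T : X → X) {k : ℕ} (C : Fin k → Set X) : ℝ :=
  ⨅ n : ℕ, Real.log (coverNum T C (n + 1)) / (n + 1)

/-- `(x, y)` is a topological entropy pair: `x ≠ y` and every two-set open cover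
`{Uᶜ, Vᶜ}`, where `U` and `V` are disjoint closed neighbourhoods of `x` and `y`,
has positive topological entropy. -/
def IsEntropyPair [TopologicalSpace X] (T : X → X) (x y : X) : Prop :=
  x ≠ y ∧ ∀ U V : Set X, IsClosed U → IsClosed V → U ∈ 𝓝 x → V ∈ 𝓝 y → Disjoint U V →
    0 < coverEntropyOf T ![Uᶜ, Vᶜ]

/-- `(x, y)` is an entropy pair for the invariant measure `μ`: `x ≠ y` and every two-set
Borel partition `(A, Aᶜ)` with `x ∈ interior A` and `y ∈ interior Aᶜ` has positive
entropy with respect to `T` and `μ`. -/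
def IsMuEntropyPair [TopologicalSpace X] [MeasurableSpace X] (T : X → X) (μ : Measure X)
    (x y : X) : Prop :=
  x ≠ y ∧ ∀ A : Set X, MeasurableSet A → x ∈ interior A → y ∈ interior Aᶜ →
    0 < partKS μ T (fun z => if z ∈ A then (0 : Fin 2) else 1)

/-- `ν` is the relatively independent square `μ ⊠_G μ` of `μ` over the sub-σ-algebra `G`:
it is determined by `ν(A × B) = ∫ E(1_A|G) · E(1_B|G) dμ` for all Borel sets `A`, `B`. -/
def IsCondSquare (G : MeasurableSpace X) [m0 : MeasurableSpace X] (μ : Measure X)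
    (ν : Measure (X × X)) : Prop :=
  ∀ A B : Set X, MeasurableSet[m0] A → MeasurableSet[m0] B →
    ν (A ×ˢ B) = ENNReal.ofReal
      (∫ x, (μ[A.indicator (fun _ => (1 : ℝ)) | G]) x *
            (μ[B.indicator (fun _ => (1 : ℝ)) | G]) x ∂μ)

/-- The σ-algebra `m₁` is contained in `m₂` modulo `μ`-null sets. -/
def SubModNull [MeasurableSpace X] (μ : Measure X) (m₁ m₂ : MeasurableSpace X) : Prop :=
  ∀ A : Set X, MeasurableSet[m₁] A → ∃ B : Set X, MeasurableSet[m₂] B ∧ μ (A ∆ B) = 0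

end Defs

section Defs2

variable {X : Type*}

/-- The σ-algebra `F^- = ⋁_{n ≥ 1} T^{-n} F`. -/
def pastAlg (T : X → X) (F : MeasurableSpace X) : MeasurableSpace X :=
  ⨆ n : ℕ, MeasurableSpace.comap (T^[n + 1]) F

/-- The σ-algebra `F^T = ⋁_{n ∈ ℤ} T^{-n} F`, where `S = T⁻¹`. -/
def hullAlg (T S : X → X) (F : MeasurableSpace X) : MeasurableSpace X :=
  ⨆ n : ℕ, MeasurableSpace.comap (T^[n]) F ⊔ MeasurableSpace.comap (S^[n]) F

/-- `P` is (the σ-algebra of) an *excellent* measurable partition for `(X, μ, T)` (here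
`S = T⁻¹`): it is generating (`σ(P^T) = 𝒜` mod `μ`) and it is generated by an increasing
sequence of finite measurable partitions `Pₙ ↑ P` with `H(Pₙ|Pₙ⁻) − H(Pₙ|P⁻) → 0`. -/
def IsExcellentPartition (P : MeasurableSpace X) [m0 : MeasurableSpace X] (μ : Measure X)
    (T S : X → X) : Prop :=
  P ≤ m0 ∧ SubModNull μ m0 (hullAlg T S P) ∧
  ∃ (m : ℕ → ℕ) (Q : ∀ n : ℕ, X → Fin (m n)),
    (∀ n, Measurable (Q n)) ∧
    Monotone (fun n => MeasurableSpace.comap (Q n) (⊤ : MeasurableSpace (Fin (m n)))) ∧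
    (⨆ n : ℕ, MeasurableSpace.comap (Q n) (⊤ : MeasurableSpace (Fin (m n)))) = P ∧
    Tendsto (fun n => condPartEntropy μ (partPast T (Q n)) (Q n) -
      condPartEntropy μ (pastAlg T P) (Q n)) atTop (𝓝 0)

end Defs2

/-- The relatively independent square `μ ⊠_G μ` is concentrated on the
diagonal of `X × X` if and only if the σ-algebras `G` and `B` coincide up to `μ`-null
sets. -/
theorem condSquare_diagonal_iff
    {X : Type*} (G : MeasurableSpace X) [MetricSpace X] [CompactSpace X]
    [m0 : MeasurableSpace X] [BorelSpace X]
    (μ : Measure X) [IsProbabilityMeasure μ] (hG : G ≤ m0)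
    (ν : Measure (X × X)) (hν : IsCondSquare G μ ν) :
    ν {p : X × X | p.1 ≠ p.2} = 0 ↔ SubModNull μ m0 G := by
  haveI : SigmaFinite (μ.trim hG) := by
    haveI := isFiniteMeasure_trim (μ := μ) hG
    infer_instance
  constructor
  · -- diagonal concentration implies G = B mod null
    intro hdiag A hA
    set f := μ[A.indicator (fun _ => (1 : ℝ)) | G] with hfdef
    set g := μ[Aᶜ.indicator (fun _ => (1 : ℝ)) | G] with hgdef
    have hintA : Integrable (A.indicator (fun _ => (1 : ℝ))) μ :=
      (integrable_const (1 : ℝ)).indicator hA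
    have hintAc : Integrable (Aᶜ.indicator (fun _ => (1 : ℝ))) μ :=
      (integrable_const (1 : ℝ)).indicator hA.compl
    have hindnn : ∀ (s : Set X), (0 : X → ℝ) ≤ᵐ[μ] s.indicator (fun _ => (1 : ℝ)) :=
      fun s => Filter.Eventually.of_forall fun x =>
        Set.indicator_nonneg (fun _ _ => zero_le_one) x
    have hf0 : (0 : X → ℝ) ≤ᵐ[μ] f := condExp_nonneg (hindnn A)
    have hg0 : (0 : X → ℝ) ≤ᵐ[μ] g := condExp_nonneg (hindnn Aᶜ)
    have hg1 : g ≤ᵐ[μ] fun _ => (1 : ℝ) := by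
      have h := condExp_mono (m := G) hintAc (integrable_const (1 : ℝ))
        (Filter.Eventually.of_forall fun x =>
          Set.indicator_le_self' (fun _ _ => zero_le_one) x)
      rw [condExp_const hG (1 : ℝ)] at h
      exact h
    have hsum : f + g =ᵐ[μ] fun _ => (1 : ℝ) := by
      have hone : A.indicator (fun _ => (1 : ℝ)) + Aᶜ.indicator (fun _ => (1 : ℝ)) =
          fun _ => (1 : ℝ) := by
        funext x
        by_cases hx : x ∈ A <;> simp [Set.indicator_apply, hx]
      calc f + g =ᵐ[μ] μ[A.indicator (fun _ => (1 : ℝ)) +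
            Aᶜ.indicator (fun _ => (1 : ℝ)) | G] := (condExp_add hintA hintAc G).symm
        _ = fun _ => (1 : ℝ) := by rw [hone, condExp_const hG]
    -- the rectangle A ×ˢ Aᶜ lies off the diagonal, hence is null
    have hsubdiag : A ×ˢ Aᶜ ⊆ {p : X × X | p.1 ≠ p.2} := by
      rintro ⟨a, b⟩ ⟨ha, hb⟩ h
      exact hb (h ▸ ha)
    have hν0 : ν (A ×ˢ Aᶜ) = 0 :=
      le_antisymm (hdiag ▸ measure_mono hsubdiag) (zero_le ..)
    have hint0 : ∫ x, f x * g x ∂μ = 0 := by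
      have h := hν A Aᶜ hA hA.compl
      rw [hν0] at h
      have hle : ∫ x, f x * g x ∂μ ≤ 0 := ENNReal.ofReal_eq_zero.mp h.symm
      have hge : 0 ≤ ∫ x, f x * g x ∂μ := by
        refine integral_nonneg_of_ae ?_
        filter_upwards [hf0, hg0] with x h1 h2
        exact mul_nonneg h1 h2
      linarith
    have hintfg : Integrable (fun x => g x * f x) μ := by
      refine Integrable.bdd_mul (c := 1) integrable_condExp
        (stronglyMeasurable_condExp.mono hG).aestronglyMeasurable ?_
      filter_upwards [hg0, hg1] with x h1 h2
      have h1' : (0 : ℝ) ≤ g x := h1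
      rw [Real.norm_eq_abs, abs_le]
      exact ⟨by linarith, h2⟩
    have hae : (fun x => g x * f x) =ᵐ[μ] 0 := by
      refine (integral_eq_zero_iff_of_nonneg_ae ?_ hintfg).mp ?_
      · filter_upwards [hf0, hg0] with x h1 h2
        exact mul_nonneg h2 h1
      · rw [← hint0]
        exact integral_congr_ae (Filter.Eventually.of_forall fun x => mul_comm _ _)
    -- a.e., f x = 0 or f x = 1
    have h01 : ∀ᵐ x ∂μ, f x = 0 ∨ f x = 1 := by
      filter_upwards [hae, hsum] with x h1 h2
      have h2' : f x + g x = 1 := h2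
      rcases mul_eq_zero.mp h1 with h | h
      · right; linarith
      · exact Or.inl h
    set B : Set X := f ⁻¹' {1} with hBdef
    have hB : MeasurableSet[G] B :=
      stronglyMeasurable_condExp.measurable (measurableSet_singleton (1 : ℝ))
    refine ⟨B, hB, ?_⟩
    have hBm0 : MeasurableSet B := hG _ hB
    -- μ (B \ A) = 0
    have h2 : μ (B \ A) = 0 := by
      have key : ∫ x in B, A.indicator (fun _ => (1 : ℝ)) x ∂μ = ∫ x in B, f x ∂μ :=
        (setIntegral_condExp hG hintA hB).symm
      have hBf : ∫ x in B, f x ∂μ = (μ B).toReal := by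
        rw [setIntegral_congr_fun hBm0 (fun x hx => (hx : f x = 1))]
        simp [measureReal_def]
      have hBA : ∫ x in B, A.indicator (fun _ => (1 : ℝ)) x ∂μ = (μ (B ∩ A)).toReal := by
        rw [setIntegral_indicator hA]
        simp [measureReal_def]
      have heq : μ (B ∩ A) = μ B := by
        have := key
        rw [hBf, hBA] at this
        exact (ENNReal.toReal_eq_toReal_iff' (measure_ne_top μ _) (measure_ne_top μ _)).mp this
      have hdec := measure_inter_add_diff B hA (μ := μ)
      rw [heq] at hdec
      exact (ENNReal.add_right_inj (measure_ne_top μ B)).mp (by rw [add_zero]; exact hdec)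
    -- μ (A \ B) = 0
    have h1 : μ (A \ B) = 0 := by
      have key : ∫ x in Bᶜ, A.indicator (fun _ => (1 : ℝ)) x ∂μ = ∫ x in Bᶜ, f x ∂μ :=
        (setIntegral_condExp hG hintA hB.compl).symm
      have hfBc : f =ᵐ[μ.restrict Bᶜ] 0 := by
        rw [Filter.EventuallyEq, ae_restrict_iff' hBm0.compl]
        filter_upwards [h01] with x hx hxB
        rcases hx with h | h
        · exact h
        · exact absurd h hxB
      have hBf : ∫ x in Bᶜ, f x ∂μ = 0 := by
        rw [integral_congr_ae hfBc]
        simp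
      have hBA : ∫ x in Bᶜ, A.indicator (fun _ => (1 : ℝ)) x ∂μ = (μ (Bᶜ ∩ A)).toReal := by
        rw [setIntegral_indicator hA]
        simp [measureReal_def]
      have heq : (μ (Bᶜ ∩ A)).toReal = 0 := by rw [← hBA, key, hBf]
      have : μ (Bᶜ ∩ A) = 0 := by
        rcases ENNReal.toReal_eq_zero_iff _ |>.mp heq with h | h
        · exact h
        · exact absurd h (measure_ne_top μ _)
      rw [Set.diff_eq, Set.inter_comm]
      exact this
    calc μ (A ∆ B) = μ ((A \ B) ∪ (B \ A)) := by rw [Set.symmDiff_def]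
      _ = 0 := measure_union_null h1 h2
  · -- G = B mod null implies diagonal concentration
    intro hsub
    have key : ∀ A : Set X, MeasurableSet A →
        μ[A.indicator (fun _ => (1 : ℝ)) | G] =ᵐ[μ] A.indicator (fun _ => (1 : ℝ)) := by
      intro A hA
      obtain ⟨B, hBG, hAB⟩ := hsub A hA
      have hnm : ∀ᵐ x ∂μ, x ∉ A ∆ B := measure_eq_zero_iff_ae_notMem.mp hAB
      have hind : A.indicator (fun _ => (1 : ℝ)) =ᵐ[μ] B.indicator (fun _ => (1 : ℝ)) := by
        filter_upwards [hnm] with x hx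
        have hiff : x ∈ A ↔ x ∈ B := by
          constructor <;> intro h
          · by_contra hB'
            exact hx (Set.mem_symmDiff.mpr (Or.inl ⟨h, hB'⟩))
          · by_contra hA'
            exact hx (Set.mem_symmDiff.mpr (Or.inr ⟨h, hA'⟩))
        by_cases h : x ∈ A
        · simp [Set.indicator_apply, h, hiff.mp h]
        · simp [Set.indicator_apply, h, mt hiff.mpr h]
      calc μ[A.indicator (fun _ => (1 : ℝ)) | G]
          =ᵐ[μ] μ[B.indicator (fun _ => (1 : ℝ)) | G] := condExp_congr_ae hind
        _ = B.indicator (fun _ => (1 : ℝ)) :=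
            condExp_of_stronglyMeasurable hG
              ((@stronglyMeasurable_const _ _ G _ _).indicator hBG)
              ((integrable_const (1 : ℝ)).indicator (hG _ hBG))
        _ =ᵐ[μ] A.indicator (fun _ => (1 : ℝ)) := hind.symm
    have hrect : ∀ U V : Set X, MeasurableSet U → MeasurableSet V → Disjoint U V →
        ν (U ×ˢ V) = 0 := by
      intro U V hU hV hUV
      rw [hν U V hU hV]
      have hzero : ∫ x, (μ[U.indicator (fun _ => (1 : ℝ)) | G]) x *
          (μ[V.indicator (fun _ => (1 : ℝ)) | G]) x ∂μ = 0 := by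
        refine (integral_congr_ae ((key U hU).mul (key V hV))).trans ?_
        have : ∀ x, U.indicator (fun _ => (1 : ℝ)) x * V.indicator (fun _ => (1 : ℝ)) x = 0 := by
          intro x
          by_cases hx : x ∈ U
          · have hxv : x ∉ V := fun hv => Set.disjoint_left.mp hUV hx hv
            simp [Set.indicator_apply, hx, hxv]
          · simp [Set.indicator_apply, hx]
        simp [this]
      rw [hzero, ENNReal.ofReal_zero]
    obtain ⟨b, hbc, -, hb⟩ := TopologicalSpace.exists_countable_basis X
    set S : Set (Set X × Set X) := {p | p.1 ∈ b ∧ p.2 ∈ b ∧ Disjoint p.1 p.2} with hSdef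
    have hSc : S.Countable := Set.Countable.mono (fun p hp => Set.mk_mem_prod hp.1 hp.2.1) (hbc.prod hbc)
    have hcover : {p : X × X | p.1 ≠ p.2} ⊆ ⋃ p ∈ S, p.1 ×ˢ p.2 := by
      rintro ⟨x, y⟩ hxy
      have hd : (0 : ℝ) < dist x y := dist_pos.mpr hxy
      obtain ⟨U, hUb, hxU, hUsub⟩ := hb.exists_subset_of_mem_open
        (Metric.mem_ball_self (x := x) (by linarith : (0 : ℝ) < dist x y / 2)) Metric.isOpen_ball
      obtain ⟨V, hVb, hyV, hVsub⟩ := hb.exists_subset_of_mem_open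
        (Metric.mem_ball_self (x := y) (by linarith : (0 : ℝ) < dist x y / 2)) Metric.isOpen_ball
      have hdisj : Disjoint U V := by
        refine Set.disjoint_left.mpr fun z hzU hzV => ?_
        have h1 := Metric.mem_ball.mp (hUsub hzU)
        have h2 := Metric.mem_ball.mp (hVsub hzV)
        have h3 : dist x z = dist z x := dist_comm x z
        have h4 := dist_triangle x z y
        linarith
      have hmem : (U, V) ∈ S := ⟨hUb, hVb, hdisj⟩
      exact Set.mem_biUnion hmem ⟨hxU, hyV⟩
    refine le_antisymm ?_ (zero_le ..)
    calc ν {p : X × X | p.1 ≠ p.2} ≤ ν (⋃ p ∈ S, p.1 ×ˢ p.2) := measure_mono hcover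
      _ = 0 := (measure_biUnion_null_iff hSc).mpr fun p hp =>
          hrect p.1 p.2 (hb.isOpen hp.1).measurableSet (hb.isOpen hp.2.1).measurableSet hp.2.2
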